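/- Let f and g be formal power series over a commutative ring R. Then for every m ∈ ℕ, the coefficient of x^m in f·g equals Σ_{k=0}^{m} σ_k · [ δ_k · ( (x^k·δ_k) ⊙ (S_k·f̄) ⊙ (S_k·ḡ) ) ][m], where f̄ = σ ⊙ f, ḡ = σ ⊙ g, and [h][m] denotes the coefficient of x^m in h (summands with k > m have zero coefficient of x^m, so the infinite sum truncates). -/

import Mathlib

/-- The signed Thue–Morse sequence: `σ n = (-1)^(Hamming weight of n)`. -/
noncomputable def sgn (R : Type*) [CommRing R] (n : ℕ) : R := (-1) ^ (Nat.digits 2 n).sum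

/-- The Sierpiński polynomial `S m = ∏_{j≥0} (1 + X^(2^j))^(d_j m)` where `d_j m` is the
`j`-th binary digit of `m`. -/
noncomputable def Sier (R : Type*) [CommRing R] (m : ℕ) : Polynomial R :=
  ∏ j ∈ Finset.range (m + 1), if m.testBit j then 1 + Polynomial.X ^ (2 ^ j) else 1

/-- `δ k`: the power series whose `m`-th coefficient is `1` if `m AND k = 0`, else `0`. -/
noncomputable def delta (R : Type*) [CommRing R] (k : ℕ) : PowerSeries R :=
  PowerSeries.mk fun m => if m &&& k = 0 then 1 else 0

/-- Termwise (Hadamard) product of power series. -/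
noncomputable def hadS {R : Type*} [CommRing R] (f g : PowerSeries R) : PowerSeries R :=
  PowerSeries.mk fun n => PowerSeries.coeff n f * PowerSeries.coeff n g

/-- `σ ⊙ f`: termwise product of a power series with the signed Thue–Morse sequence. -/
noncomputable def barS {R : Type*} [CommRing R] (f : PowerSeries R) : PowerSeries R :=
  PowerSeries.mk fun n => sgn R n * PowerSeries.coeff n f


section
variable (R : Type*) [CommRing R]

theorem Nat.xor_eq_zero {a b : ℕ} : a ^^^ b = 0 ↔ a = b := by
  constructor
  · intro h; simpa using congrArg (· ^^^ b) h
  · rintro rfl; exact Nat.xor_self _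

lemma sgn_zero : sgn R 0 = 1 := by simp [sgn]

lemma sgn_rec {n : ℕ} (h : n ≠ 0) : sgn R n = (-1) ^ (n % 2) * sgn R (n / 2) := by
  unfold sgn
  rw [Nat.digits_def' (one_lt_two) (Nat.pos_of_ne_zero h), List.sum_cons, pow_add]

lemma sgn_sq (n : ℕ) : sgn R n * sgn R n = 1 := by
  unfold sgn; rw [← pow_add]; exact Even.neg_one_pow ⟨_, rfl⟩

lemma mod_two_xor (x y : ℕ) : (x ^^^ y) % 2 = (x % 2 + y % 2) % 2 := by
  have h : ((x^^^y).testBit 0) = (x.testBit 0 ^^ y.testBit 0) := Nat.testBit_xor x y 0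
  simp only [Nat.testBit_zero] at h
  rcases Nat.mod_two_eq_zero_or_one x with h1|h1 <;> rcases Nat.mod_two_eq_zero_or_one y with h2|h2 <;>
    rcases Nat.mod_two_eq_zero_or_one (x^^^y) with h3|h3 <;> simp [h1,h2,h3] at h ⊢

lemma div_two_xor (x y : ℕ) : (x ^^^ y) / 2 = x / 2 ^^^ y / 2 := by
  refine Nat.eq_of_testBit_eq fun i => ?_
  simp [Nat.testBit_div_two, Nat.testBit_xor]

lemma sgn_xor (x y : ℕ) : sgn R (x ^^^ y) = sgn R x * sgn R y := by
  induction x using Nat.strong_induction_on generalizing y with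
  | _ x ih =>
  rcases eq_or_ne x 0 with hx|hx
  · subst hx; simp [sgn_zero]
  rcases eq_or_ne y 0 with hy|hy
  · subst hy; simp [sgn_zero]
  rcases eq_or_ne x y with hxy|hxy
  · subst hxy; rw [Nat.xor_self, sgn_zero, eq_comm]; exact sgn_sq R x
  have hxy0 : x ^^^ y ≠ 0 := fun h => hxy (Nat.xor_eq_zero.mp h)
  rw [sgn_rec R hxy0, sgn_rec R hx, sgn_rec R hy, div_two_xor,
    ih (x/2) (Nat.div_lt_self (Nat.pos_of_ne_zero hx) one_lt_two) (y/2)]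
  rw [mod_two_xor x y]
  rcases Nat.mod_two_eq_zero_or_one x with h1|h1 <;> rcases Nat.mod_two_eq_zero_or_one y with h2|h2 <;>
    rw [h1, h2] <;> norm_num <;> ring

lemma sgn_two_pow (i : ℕ) : sgn R (2 ^ i) = -1 := by
  induction i with
  | zero => rw [pow_zero, sgn_rec R one_ne_zero]; norm_num [sgn_zero]
  | succ n ih =>
    have hne : (2:ℕ) ^ (n+1) ≠ 0 := by positivity
    rw [sgn_rec R hne, pow_succ, Nat.mul_mod_left, Nat.mul_div_cancel _ (by norm_num)]
    simpa using ih

end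

section bits

lemma add_eq_xor (x y : ℕ) : x + y = (x ^^^ y) + 2 * (x &&& y) := by
  induction x using Nat.strong_induction_on generalizing y with
  | _ x ih =>
  rcases eq_or_ne x 0 with hx|hx
  · subst hx; simp
  have ihd := ih (x/2) (Nat.div_lt_self (Nat.pos_of_ne_zero hx) one_lt_two) (y/2)
  have e1 := Nat.div_add_mod (x ^^^ y) 2
  have e2 := Nat.div_add_mod (x &&& y) 2
  have e3 := Nat.div_add_mod x 2
  have e4 := Nat.div_add_mod y 2
  rw [div_two_xor] at e1
  rw [show (x &&& y) / 2 = x / 2 &&& y / 2 from Nat.eq_of_testBit_eq fun i => by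
    simp [Nat.testBit_div_two, Nat.testBit_and]] at e2
  have m1 := mod_two_xor x y
  have m2 : (x &&& y) % 2 = (x % 2) * (y % 2) := by
    have h : ((x&&&y).testBit 0) = (x.testBit 0 && y.testBit 0) := Nat.testBit_and x y 0
    simp only [Nat.testBit_zero] at h
    rcases Nat.mod_two_eq_zero_or_one x with h1|h1 <;> rcases Nat.mod_two_eq_zero_or_one y with h2|h2 <;>
      rcases Nat.mod_two_eq_zero_or_one (x&&&y) with h3|h3 <;> simp [h1,h2,h3] at h ⊢
  rcases Nat.mod_two_eq_zero_or_one x with h1|h1 <;> rcases Nat.mod_two_eq_zero_or_one y with h2|h2 <;>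
    rw [h1, h2] at m1 m2 <;> omega

lemma add_of_and_eq_zero {x y : ℕ} (h : x &&& y = 0) : x + y = x ^^^ y := by
  rw [add_eq_xor, h]; omega

lemma band_le {x y : ℕ} (h : x &&& y = x) : x ≤ y := h ▸ Nat.and_le_right

lemma sub_of_submask {j q : ℕ} (h : j &&& q = j) : q - j = q ^^^ j := by
  have hd : j &&& (q ^^^ j) = 0 := by
    refine Nat.eq_of_testBit_eq fun i => ?_
    have h' := congrArg (fun t => t.testBit i) h
    simp only [Nat.testBit_and, Nat.testBit_xor, Nat.zero_testBit] at h' ⊢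
    cases hj : j.testBit i <;> cases hq : q.testBit i <;> simp_all
  have hx : j ^^^ (q ^^^ j) = q := by
    rw [Nat.xor_comm q j, ← Nat.xor_assoc, Nat.xor_self, Nat.zero_xor]
  have hs : j + (q ^^^ j) = q := by rw [add_of_and_eq_zero hd, hx]
  omega

lemma submask_of_sub {a q : ℕ} (hle : a ≤ q) (h : (q - a) &&& q = q - a) : a &&& q = a := by
  obtain ⟨j, hj⟩ : ∃ j, q - a = j := ⟨_, rfl⟩
  rw [hj] at h
  have h2 : q - j = q ^^^ j := sub_of_submask h
  have h3 : a = q ^^^ j := by omega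
  rw [h3]
  refine Nat.eq_of_testBit_eq fun i => ?_
  have hb := congrArg (fun t => t.testBit i) h
  simp only [Nat.testBit_and, Nat.testBit_xor] at hb ⊢
  cases hjb : j.testBit i <;> cases hq : q.testBit i <;> simp_all

lemma mask_iff1 {k q : ℕ} : (k ≤ q ∧ (q - k) &&& k = 0) ↔ q &&& k = k := by
  constructor
  · rintro ⟨hle, h0⟩
    obtain ⟨d, hd⟩ : ∃ d, q - k = d := ⟨_, rfl⟩
    rw [hd] at h0
    have hs : d + k = d ^^^ k := add_of_and_eq_zero h0
    have hq : q = d ^^^ k := by omega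
    rw [hq]
    refine Nat.eq_of_testBit_eq fun i => ?_
    have hb := congrArg (fun t => t.testBit i) h0
    simp only [Nat.testBit_and, Nat.testBit_xor, Nat.zero_testBit] at hb ⊢
    cases hj : d.testBit i <;> cases hk : k.testBit i <;> simp_all
  · intro h
    have hkq : k &&& q = k := by rw [Nat.and_comm]; exact h
    have hle : k ≤ q := band_le hkq
    have hsub : q - k = q ^^^ k := sub_of_submask hkq
    refine ⟨hle, ?_⟩
    rw [hsub]
    refine Nat.eq_of_testBit_eq fun i => ?_
    have hb := congrArg (fun t => t.testBit i) h
    simp only [Nat.testBit_and, Nat.testBit_xor, Nat.zero_testBit] at hb ⊢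
    cases hj : q.testBit i <;> cases hk : k.testBit i <;> simp_all

end bits

section
variable (R : Type*) [CommRing R]

lemma exists_testBit {M : ℕ} (hM : M ≠ 0) : ∃ i, M.testBit i = true := by
  by_contra hc
  push_neg at hc
  exact hM (Nat.eq_of_testBit_eq fun i => by
    simp [Bool.eq_false_iff.mpr (hc i), Nat.zero_testBit])

lemma sum_submask (N L M : ℕ) (hLM : L &&& M = 0) (hN : L ||| M ≤ N) :
    (∑ k ∈ Finset.range (N + 1),
      if L &&& k = L ∧ k &&& (L ||| M) = k then sgn R k else 0)
    = if M = 0 then sgn R L else 0 := by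
  rcases eq_or_ne M 0 with hM | hM
  · subst hM
    rw [if_pos rfl]
    have hL : L ≤ N := by simpa using hN
    have hcond : ∀ k : ℕ, (L &&& k = L ∧ k &&& (L ||| 0) = k) ↔ k = L := by
      intro k
      rw [Nat.or_zero]
      constructor
      · rintro ⟨h1, h2⟩
        exact le_antisymm (band_le h2) (band_le h1)
      · rintro rfl; exact ⟨Nat.and_self _, Nat.and_self _⟩
    calc (∑ k ∈ Finset.range (N + 1),
        if L &&& k = L ∧ k &&& (L ||| 0) = k then sgn R k else 0)
        = ∑ k ∈ Finset.range (N + 1), if k = L then sgn R k else 0 :=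
          Finset.sum_congr rfl fun k _ => if_congr (hcond k) rfl rfl
      _ = if L ∈ Finset.range (N + 1) then sgn R L else 0 := Finset.sum_ite_eq' _ _ _
      _ = sgn R L := by rw [if_pos (Finset.mem_range.mpr (Nat.lt_succ_of_le hL))]
  · rw [if_neg hM]
    obtain ⟨i, hi⟩ := exists_testBit hM
    set p := 2 ^ i with hp
    have hLi : L.testBit i = false := by
      have hb := congrArg (fun t => t.testBit i) hLM
      simp only [Nat.testBit_and, Nat.zero_testBit] at hb
      cases hL : L.testBit i <;> simp_all
    have claim1 : ∀ k, L &&& k = L → L &&& (k ^^^ p) = L := by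
      intro k h1
      refine Nat.eq_of_testBit_eq fun j => ?_
      have hb1 := congrArg (fun t => t.testBit j) h1
      simp only [Nat.testBit_and, Nat.testBit_xor, hp, Nat.testBit_two_pow] at hb1 ⊢
      rcases eq_or_ne i j with hij | hij
      · subst hij; simp [hLi]
      · simp only [hij, decide_false, Bool.xor_false]
        exact hb1
    have claim2 : ∀ k, k &&& (L ||| M) = k → (k ^^^ p) &&& (L ||| M) = (k ^^^ p) := by
      intro k h2
      refine Nat.eq_of_testBit_eq fun j => ?_
      have hb2 := congrArg (fun t => t.testBit j) h2
      simp only [Nat.testBit_and, Nat.testBit_or, Nat.testBit_xor, hp,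
        Nat.testBit_two_pow] at hb2 ⊢
      rcases eq_or_ne i j with hij | hij
      · subst hij; simp [hi]
      · simp only [hij, decide_false, Bool.xor_false]
        exact hb2
    have claim : ∀ k, (L &&& k = L ∧ k &&& (L ||| M) = k) →
        (L &&& (k ^^^ p) = L ∧ (k ^^^ p) &&& (L ||| M) = (k ^^^ p)) :=
      fun k h => ⟨claim1 k h.1, claim2 k h.2⟩
    have hinv : ∀ k, (k ^^^ p) ^^^ p = k := fun k => xor_cancel_right k p
    refine Finset.sum_involution
      (fun k _ => if L &&& k = L ∧ k &&& (L ||| M) = k then k ^^^ p else k) ?_ ?_ ?_ ?_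
    · intro k _
      by_cases hck : L &&& k = L ∧ k &&& (L ||| M) = k
      · rw [if_pos hck, if_pos hck, if_pos (claim k hck), sgn_xor, hp, sgn_two_pow]
        ring
      · rw [if_neg hck, if_neg hck, if_neg hck]
        exact add_zero 0
    · intro k _ hf
      by_cases hck : L &&& k = L ∧ k &&& (L ||| M) = k
      · rw [if_pos hck]
        intro heq
        have hb := congrArg (fun t => t.testBit i) heq
        simp only [Nat.testBit_xor, hp, Nat.testBit_two_pow, decide_true] at hb
        cases hk : k.testBit i <;> simp [hk] at hb
      · exact absurd (if_neg hck) hf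
    · intro k hk
      by_cases hck : L &&& k = L ∧ k &&& (L ||| M) = k
      · rw [if_pos hck]
        refine Finset.mem_range.mpr (Nat.lt_succ_of_le ?_)
        exact le_trans (band_le (claim k hck).2) hN
      · rwa [if_neg hck]
    · intro k hk
      by_cases hck : L &&& k = L ∧ k &&& (L ||| M) = k
      · rw [if_pos hck, if_pos (claim k hck), hinv]
      · rw [if_neg hck, if_neg hck]

end


section bits2

lemma testBit_true_le {n N : ℕ} (h : n.testBit N = true) : 2 ^ N ≤ n := by
  refine band_le (?_ : 2 ^ N &&& n = 2 ^ N)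
  refine Nat.eq_of_testBit_eq fun i => ?_
  simp only [Nat.testBit_and, Nat.testBit_two_pow]
  rcases eq_or_ne N i with rfl | hne
  · simp [h]
  · simp [hne]

lemma testBit_of_bounds {n N : ℕ} (h1 : 2 ^ N ≤ n) (h2 : n < 2 ^ (N + 1)) :
    n.testBit N = true := by
  have hp : 2 ^ (N + 1) = 2 ^ N * 2 := pow_succ 2 N
  have hd : n / 2 ^ N = 1 := Nat.div_eq_of_lt_le (by simpa using h1) (by omega)
  rw [Nat.testBit_eq_decide_div_mod_eq, hd]
  rfl

lemma submask_trans {x y z : ℕ} (h1 : x &&& y = x) (h2 : y &&& z = y) : x &&& z = x := by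
  refine Nat.eq_of_testBit_eq fun i => ?_
  have hb1 := congrArg (fun t => t.testBit i) h1
  have hb2 := congrArg (fun t => t.testBit i) h2
  simp only [Nat.testBit_and] at hb1 hb2 ⊢
  cases hx : x.testBit i <;> cases hy : y.testBit i <;> cases hz : z.testBit i <;> simp_all

end bits2

section sier
variable (R : Type*) [CommRing R]

lemma sier_aux (k : ℕ) : ∀ (N n : ℕ),
    (∏ j ∈ Finset.range N, if k.testBit j then 1 + Polynomial.X ^ (2 ^ j) else 1 :
      Polynomial R).coeff n = if n &&& (k &&& (2 ^ N - 1)) = n then 1 else 0 := by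
  intro N
  induction N with
  | zero =>
    intro n
    rw [Finset.prod_range_zero, Polynomial.coeff_one,
      show k &&& (2 ^ 0 - 1) = 0 by simp, Nat.and_zero]
    by_cases hn : n = 0
    · simp [hn]
    · rw [if_neg hn, if_neg (Ne.symm hn)]
  | succ N ih =>
    intro n
    rw [Finset.prod_range_succ]
    cases hbit : k.testBit N with
    | false =>
      rw [if_neg Bool.false_ne_true, mul_one, ih n]
      have hK : k &&& (2 ^ N - 1) = k &&& (2 ^ (N + 1) - 1) := by
        refine Nat.eq_of_testBit_eq fun i => ?_
        simp only [Nat.testBit_and, Nat.testBit_two_pow_sub_one]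
        rcases eq_or_ne i N with rfl | hne
        · simp [hbit]
        · have hdec : decide (i < N) = decide (i < N + 1) := decide_eq_decide.mpr (by omega)
          rw [hdec]
      rw [hK]
    | true =>
      rw [if_pos rfl, mul_add, mul_one, Polynomial.coeff_add,
        Polynomial.coeff_mul_X_pow', ih n]
      cases hn : n.testBit N with
      | true =>
        have h2 : 2 ^ N ≤ n := testBit_true_le hn
        have hc1 : ¬ (n &&& (k &&& (2 ^ N - 1)) = n) := by
          intro hcon
          have hb := congrArg (fun t => t.testBit N) hcon
          simp [Nat.testBit_and, Nat.testBit_two_pow_sub_one, hn] at hb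
        rw [if_neg hc1, zero_add, if_pos h2, ih (n - 2 ^ N)]
        have hsubm : 2 ^ N &&& n = 2 ^ N := by
          refine Nat.eq_of_testBit_eq fun i => ?_
          simp only [Nat.testBit_and, Nat.testBit_two_pow]
          rcases eq_or_ne N i with rfl | hne
          · simp [hn]
          · simp [hne]
        have hsub : n - 2 ^ N = n ^^^ 2 ^ N := sub_of_submask hsubm
        rw [hsub]
        have hiff : ((n ^^^ 2 ^ N) &&& (k &&& (2 ^ N - 1)) = (n ^^^ 2 ^ N)) ↔
            (n &&& (k &&& (2 ^ (N + 1) - 1)) = n) := by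
          constructor <;> intro h <;> refine Nat.eq_of_testBit_eq fun i => ?_ <;>
            have hb := congrArg (fun t => t.testBit i) h <;>
            simp only [Nat.testBit_and, Nat.testBit_xor, Nat.testBit_two_pow,
              Nat.testBit_two_pow_sub_one] at hb ⊢ <;>
            rcases eq_or_ne N i with rfl | hne
          · simp [hn, hbit]
          · have hdec : decide (i < N) = decide (i < N + 1) := decide_eq_decide.mpr (by omega)
            simp only [hne, decide_false, Bool.xor_false] at hb ⊢
            rw [← hdec]
            exact hb
          · simp [hn]
          · have hdec : decide (i < N) = decide (i < N + 1) := decide_eq_decide.mpr (by omega)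
            simp only [hne, decide_false, Bool.xor_false] at hb ⊢
            rw [hdec]
            exact hb
        rw [if_congr hiff rfl rfl]
      | false =>
        have hzero : (if 2 ^ N ≤ n then
            if (n - 2 ^ N) &&& (k &&& (2 ^ N - 1)) = n - 2 ^ N then (1:R) else 0 else 0) = 0 := by
          by_cases hle : 2 ^ N ≤ n
          · rw [if_pos hle, if_neg]
            intro hcon
            have hb1 : n - 2 ^ N ≤ k &&& (2 ^ N - 1) := band_le hcon
            have hb2 : k &&& (2 ^ N - 1) ≤ 2 ^ N - 1 := Nat.and_le_right
            have hp : 2 ^ (N + 1) = 2 ^ N * 2 := pow_succ 2 N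
            have h3 : n - 2 ^ N ≤ 2 ^ N - 1 := le_trans hb1 hb2
            have hpos : 0 < 2 ^ N := Nat.pow_pos (by norm_num)
            have hlt : n < 2 ^ (N + 1) := by omega
            rw [testBit_of_bounds hle hlt] at hn
            exact Bool.noConfusion hn
          · rw [if_neg hle]
        rw [ih (n - 2 ^ N), hzero, add_zero]
        have hiff : (n &&& (k &&& (2 ^ N - 1)) = n) ↔
            (n &&& (k &&& (2 ^ (N + 1) - 1)) = n) := by
          constructor <;> intro h <;> refine Nat.eq_of_testBit_eq fun i => ?_ <;>
            have hb := congrArg (fun t => t.testBit i) h <;>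
            simp only [Nat.testBit_and, Nat.testBit_two_pow_sub_one] at hb ⊢ <;>
            rcases eq_or_ne N i with rfl | hne
          · simp [hn]
          · have hdec : decide (i < N) = decide (i < N + 1) := decide_eq_decide.mpr (by omega)
            rw [← hdec]
            exact hb
          · simp [hn]
          · have hdec : decide (i < N) = decide (i < N + 1) := decide_eq_decide.mpr (by omega)
            rw [hdec]
            exact hb
        rw [if_congr hiff rfl rfl]

lemma sier_coeff (k n : ℕ) : (Sier R k).coeff n = if n &&& k = n then 1 else 0 := by
  have h := sier_aux R k (k + 1) n
  have hk : k &&& (2 ^ (k + 1) - 1) = k := by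
    rw [Nat.and_two_pow_sub_one_eq_mod]
    exact Nat.mod_eq_of_lt (lt_of_lt_of_le (Nat.lt_two_pow_self (n := k))
      (Nat.pow_le_pow_right (by norm_num) (Nat.le_succ k)))
  rw [hk] at h
  exact h

end sier

section key
variable (R : Type*) [CommRing R]

lemma tb {x y : ℕ} (h : x = y) (i : ℕ) : x.testBit i = y.testBit i := by rw [h]

lemma key (m a c : ℕ) (ha : a ≤ m) (hc : c ≤ m) :
    (∑ q ∈ Finset.range (m+1), ∑ k ∈ Finset.range (m+1),
      if ((m-q) &&& k = 0 ∧ q &&& k = k ∧ a ≤ q ∧ (q-a) &&& k = q-a ∧ c ≤ q ∧ (q-c) &&& k = q-c)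
        then sgn R k else 0)
    = sgn R a * sgn R c * (if a + c = m then 1 else 0) := by
  have hac_sum : a + c = (a ^^^ c) + 2 * (a &&& c) := add_eq_xor a c
  have inner : ∀ q, q ≤ m →
      (∑ k ∈ Finset.range (m+1),
        if ((m-q) &&& k = 0 ∧ q &&& k = k ∧ a ≤ q ∧ (q-a) &&& k = q-a ∧ c ≤ q ∧ (q-c) &&& k = q-c)
          then sgn R k else 0)
      = if (a &&& q = a ∧ c &&& q = c ∧ q &&& (m-q) = a &&& c)
          then sgn R (q ^^^ (a &&& c)) else 0 := by
    intro q hq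
    by_cases hE : a &&& q = a ∧ c &&& q = c ∧ (q ^^^ (a &&& c)) &&& (m-q) = 0
    · obtain ⟨haq, hcq, hE3⟩ := hE
      have haq' : a ≤ q := band_le haq
      have hcq' : c ≤ q := band_le hcq
      have hqa : q - a = q ^^^ a := sub_of_submask haq
      have hqc : q - c = q ^^^ c := sub_of_submask hcq
      have cond_iff : ∀ k,
          ((m-q) &&& k = 0 ∧ q &&& k = k ∧ a ≤ q ∧ (q-a) &&& k = q-a ∧ c ≤ q ∧ (q-c) &&& k = q-c)
          ↔ ((q ^^^ (a &&& c)) &&& k = (q ^^^ (a &&& c)) ∧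
             k &&& ((q ^^^ (a &&& c)) ||| ((a &&& c) ^^^ ((a &&& c) &&& (m-q)))) = k) := by
        intro k
        rw [hqa, hqc]
        constructor
        · rintro ⟨h0, h1, -, h2, -, h3⟩
          constructor
          · refine Nat.eq_of_testBit_eq fun i => ?_
            have b1 := tb haq i; have b2 := tb hcq i; have b3 := tb h2 i; have b4 := tb h3 i
            simp only [Nat.testBit_and, Nat.testBit_xor, Nat.zero_testBit] at b1 b2 b3 b4 ⊢
            revert b1 b2 b3 b4
            generalize a.testBit i = A
            generalize c.testBit i = C
            generalize q.testBit i = Q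
            generalize k.testBit i = K
            revert A C Q K
            decide
          · refine Nat.eq_of_testBit_eq fun i => ?_
            have b1 := tb h0 i; have b2 := tb h1 i; have b3 := tb hE3 i
            simp only [Nat.testBit_and, Nat.testBit_or, Nat.testBit_xor, Nat.zero_testBit]
              at b1 b2 b3 ⊢
            revert b1 b2 b3
            generalize a.testBit i = A
            generalize c.testBit i = C
            generalize q.testBit i = Q
            generalize k.testBit i = K
            generalize (m-q).testBit i = Rb
            revert A C Q K Rb
            decide
        · rintro ⟨h1, h2⟩
          have g0 : (m-q) &&& k = 0 := by
            refine Nat.eq_of_testBit_eq fun i => ?_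
            have b1 := tb h1 i; have b2 := tb h2 i; have b3 := tb hE3 i
            simp only [Nat.testBit_and, Nat.testBit_or, Nat.testBit_xor, Nat.zero_testBit]
              at b1 b2 b3 ⊢
            revert b1 b2 b3
            generalize a.testBit i = A
            generalize c.testBit i = C
            generalize q.testBit i = Q
            generalize k.testBit i = K
            generalize (m-q).testBit i = Rb
            revert A C Q K Rb
            decide
          have g1 : q &&& k = k := by
            refine Nat.eq_of_testBit_eq fun i => ?_
            have b1 := tb h1 i; have b2 := tb h2 i; have b3 := tb haq i; have b4 := tb hcq i
            simp only [Nat.testBit_and, Nat.testBit_or, Nat.testBit_xor, Nat.zero_testBit]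
              at b1 b2 b3 b4 ⊢
            revert b1 b2 b3 b4
            generalize a.testBit i = A
            generalize c.testBit i = C
            generalize q.testBit i = Q
            generalize k.testBit i = K
            generalize (m-q).testBit i = Rb
            revert A C Q K Rb
            decide
          have g2 : (q ^^^ a) &&& k = q ^^^ a := by
            refine Nat.eq_of_testBit_eq fun i => ?_
            have b1 := tb h1 i; have b2 := tb haq i; have b3 := tb hcq i
            simp only [Nat.testBit_and, Nat.testBit_xor, Nat.zero_testBit] at b1 b2 b3 ⊢
            revert b1 b2 b3
            generalize a.testBit i = A
            generalize c.testBit i = C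
            generalize q.testBit i = Q
            generalize k.testBit i = K
            revert A C Q K
            decide
          have g3 : (q ^^^ c) &&& k = q ^^^ c := by
            refine Nat.eq_of_testBit_eq fun i => ?_
            have b1 := tb h1 i; have b2 := tb haq i; have b3 := tb hcq i
            simp only [Nat.testBit_and, Nat.testBit_xor, Nat.zero_testBit] at b1 b2 b3 ⊢
            revert b1 b2 b3
            generalize a.testBit i = A
            generalize c.testBit i = C
            generalize q.testBit i = Q
            generalize k.testBit i = K
            revert A C Q K
            decide
          exact ⟨g0, g1, haq', g2, hcq', g3⟩
      have hLM : (q ^^^ (a &&& c)) &&& ((a &&& c) ^^^ ((a &&& c) &&& (m-q))) = 0 := by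
        refine Nat.eq_of_testBit_eq fun i => ?_
        have b1 := tb haq i; have b2 := tb hcq i
        simp only [Nat.testBit_and, Nat.testBit_xor, Nat.zero_testBit] at b1 b2 ⊢
        revert b1 b2
        generalize a.testBit i = A
        generalize c.testBit i = C
        generalize q.testBit i = Q
        generalize (m-q).testBit i = Rb
        revert A C Q Rb
        decide
      have hsubq : ((q ^^^ (a &&& c)) ||| ((a &&& c) ^^^ ((a &&& c) &&& (m-q)))) &&& q
          = ((q ^^^ (a &&& c)) ||| ((a &&& c) ^^^ ((a &&& c) &&& (m-q)))) := by
        refine Nat.eq_of_testBit_eq fun i => ?_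
        have b1 := tb haq i; have b2 := tb hcq i
        simp only [Nat.testBit_and, Nat.testBit_or, Nat.testBit_xor, Nat.zero_testBit]
          at b1 b2 ⊢
        revert b1 b2
        generalize a.testBit i = A
        generalize c.testBit i = C
        generalize q.testBit i = Q
        generalize (m-q).testBit i = Rb
        revert A C Q Rb
        decide
      have hN : ((q ^^^ (a &&& c)) ||| ((a &&& c) ^^^ ((a &&& c) &&& (m-q)))) ≤ m :=
        le_trans (band_le hsubq) hq
      rw [Finset.sum_congr rfl (fun k _ => if_congr (cond_iff k) rfl rfl),
        sum_submask R m _ _ hLM hN]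
      by_cases hMr : (a &&& c) &&& (m-q) = a &&& c
      · have hM0 : (a &&& c) ^^^ ((a &&& c) &&& (m-q)) = 0 := by rw [hMr, Nat.xor_self]
        have hD : q &&& (m-q) = a &&& c := by
          refine Nat.eq_of_testBit_eq fun i => ?_
          have b1 := tb haq i; have b2 := tb hcq i; have b3 := tb hE3 i; have b4 := tb hMr i
          simp only [Nat.testBit_and, Nat.testBit_xor, Nat.zero_testBit] at b1 b2 b3 b4 ⊢
          revert b1 b2 b3 b4
          generalize a.testBit i = A
          generalize c.testBit i = C
          generalize q.testBit i = Q
          generalize (m-q).testBit i = Rb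
          revert A C Q Rb
          decide
        rw [if_pos hM0, if_pos ⟨haq, hcq, hD⟩]
      · have hM0 : ¬ ((a &&& c) ^^^ ((a &&& c) &&& (m-q)) = 0) := fun h => by
          have h' := Nat.xor_eq_zero.mp h
          exact hMr h'.symm
        have hD : ¬ (a &&& q = a ∧ c &&& q = c ∧ q &&& (m-q) = a &&& c) := by
          rintro ⟨-, -, hD3⟩
          apply hMr
          rw [← hD3, Nat.and_assoc, Nat.and_self]
        rw [if_neg hM0, if_neg hD]
    · have hzero : ∀ k ∈ Finset.range (m+1),
          (if ((m-q) &&& k = 0 ∧ q &&& k = k ∧ a ≤ q ∧ (q-a) &&& k = q-a ∧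
              c ≤ q ∧ (q-c) &&& k = q-c)
            then sgn R k else 0) = 0 := by
        intro k _
        rw [if_neg]
        rintro ⟨h0, h1, haq2, h2, hcq2, h3⟩
        apply hE
        have h1' : k &&& q = k := by rw [Nat.and_comm k q]; exact h1
        have haq : a &&& q = a := submask_of_sub haq2 (submask_trans h2 h1')
        have hcq : c &&& q = c := submask_of_sub hcq2 (submask_trans h3 h1')
        refine ⟨haq, hcq, ?_⟩
        rw [sub_of_submask haq] at h2
        rw [sub_of_submask hcq] at h3
        refine Nat.eq_of_testBit_eq fun i => ?_
        have b0 := tb h0 i; have b1 := tb h1 i; have b2 := tb h2 i; have b3 := tb h3 i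
        have b4 := tb haq i; have b5 := tb hcq i
        simp only [Nat.testBit_and, Nat.testBit_xor, Nat.zero_testBit] at b0 b1 b2 b3 b4 b5 ⊢
        revert b0 b1 b2 b3 b4 b5
        generalize a.testBit i = A
        generalize c.testBit i = C
        generalize q.testBit i = Q
        generalize k.testBit i = K
        generalize (m-q).testBit i = Rb
        revert A C Q K Rb
        decide
      rw [Finset.sum_eq_zero hzero, if_neg]
      rintro ⟨haq, hcq, hD3⟩
      apply hE
      refine ⟨haq, hcq, ?_⟩
      refine Nat.eq_of_testBit_eq fun i => ?_
      have b1 := tb haq i; have b2 := tb hcq i; have b3 := tb hD3 i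
      simp only [Nat.testBit_and, Nat.testBit_xor, Nat.zero_testBit] at b1 b2 b3 ⊢
      revert b1 b2 b3
      generalize a.testBit i = A
      generalize c.testBit i = C
      generalize q.testBit i = Q
      generalize (m-q).testBit i = Rb
      revert A C Q Rb
      decide
  rw [Finset.sum_congr rfl (fun q hqm => inner q (Nat.lt_succ_iff.mp (Finset.mem_range.mp hqm)))]
  have conv : ∀ q : ℕ,
      (if (a &&& q = a ∧ c &&& q = c ∧ q &&& (m-q) = a &&& c) then sgn R (q ^^^ (a &&& c)) else 0)
      = (if (a &&& q = a ∧ c &&& q = c ∧ q &&& (m-q) = a &&& c) then sgn R q else 0)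
          * sgn R (a &&& c) := by
    intro q
    by_cases h : a &&& q = a ∧ c &&& q = c ∧ q &&& (m-q) = a &&& c
    · rw [if_pos h, if_pos h, sgn_xor]
    · rw [if_neg h, if_neg h, zero_mul]
  rw [Finset.sum_congr rfl (fun q _ => conv q), ← Finset.sum_mul]
  by_cases hG : 2 * (a &&& c) ≤ m ∧ (m - 2 * (a &&& c)) &&& (a &&& c) = 0 ∧
      (a ^^^ c) &&& (m - 2 * (a &&& c)) = a ^^^ c
  · obtain ⟨hG1, hG2, hG3⟩ := hG
    have q_iff : ∀ q, q ≤ m →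
        ((a &&& q = a ∧ c &&& q = c ∧ q &&& (m-q) = a &&& c)
        ↔ ((a ||| c) &&& q = (a ||| c) ∧
           q &&& ((a ||| c) ||| ((m - 2 * (a &&& c)) ^^^ (a ^^^ c))) = q)) := by
      intro q hqm
      constructor
      · rintro ⟨haq, hcq, he⟩
        have hs : q ^^^ (m - q) = m - 2 * (a &&& c) := by
          have hxe := add_eq_xor q (m - q)
          rw [he] at hxe
          omega
        constructor
        · refine Nat.eq_of_testBit_eq fun i => ?_
          have b1 := tb haq i; have b2 := tb hcq i
          simp only [Nat.testBit_and, Nat.testBit_or] at b1 b2 ⊢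
          revert b1 b2
          generalize a.testBit i = A
          generalize c.testBit i = C
          generalize q.testBit i = Q
          revert A C Q
          decide
        · rw [← hs]
          refine Nat.eq_of_testBit_eq fun i => ?_
          have b1 := tb haq i; have b2 := tb hcq i; have b3 := tb he i
          simp only [Nat.testBit_and, Nat.testBit_or, Nat.testBit_xor] at b1 b2 b3 ⊢
          revert b1 b2 b3
          generalize a.testBit i = A
          generalize c.testBit i = C
          generalize q.testBit i = Q
          generalize (m-q).testBit i = Rb
          revert A C Q Rb
          decide
      · rintro ⟨h1, h2⟩
        have haa : a &&& (a ||| c) = a := by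
          refine Nat.eq_of_testBit_eq fun i => ?_
          simp only [Nat.testBit_and, Nat.testBit_or]
          generalize a.testBit i = A
          generalize c.testBit i = C
          revert A C
          decide
        have hcc : c &&& (a ||| c) = c := by
          refine Nat.eq_of_testBit_eq fun i => ?_
          simp only [Nat.testBit_and, Nat.testBit_or]
          generalize a.testBit i = A
          generalize c.testBit i = C
          revert A C
          decide
        have haq : a &&& q = a := submask_trans haa h1
        have hcq : c &&& q = c := submask_trans hcc h1
        refine ⟨haq, hcq, ?_⟩
        have hEq : (a &&& c) &&& q = a &&& c := by
          refine Nat.eq_of_testBit_eq fun i => ?_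
          have b1 := tb haq i; have b2 := tb hcq i
          simp only [Nat.testBit_and] at b1 b2 ⊢
          revert b1 b2
          generalize a.testBit i = A
          generalize c.testBit i = C
          generalize q.testBit i = Q
          revert A C Q
          decide
        have hu : (q ^^^ (a &&& c)) &&& (m - 2 * (a &&& c)) = q ^^^ (a &&& c) := by
          refine Nat.eq_of_testBit_eq fun i => ?_
          have b1 := tb h2 i; have b2 := tb hG2 i; have b3 := tb hG3 i
          have b4 := tb haq i; have b5 := tb hcq i
          simp only [Nat.testBit_and, Nat.testBit_or, Nat.testBit_xor, Nat.zero_testBit]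
            at b1 b2 b3 b4 b5 ⊢
          revert b1 b2 b3 b4 b5
          generalize a.testBit i = A
          generalize c.testBit i = C
          generalize q.testBit i = Q
          generalize (m - 2 * (a &&& c)).testBit i = S
          revert A C Q S
          decide
        have heu : (a &&& c) &&& (q ^^^ (a &&& c)) = 0 := by
          refine Nat.eq_of_testBit_eq fun i => ?_
          have b1 := tb hEq i
          simp only [Nat.testBit_and, Nat.testBit_xor, Nat.zero_testBit] at b1 ⊢
          revert b1
          generalize a.testBit i = A
          generalize c.testBit i = C
          generalize q.testBit i = Q
          revert A C Q
          decide
        have hq_add : (a &&& c) + (q ^^^ (a &&& c)) = q := by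
          rw [add_of_and_eq_zero heu, Nat.xor_comm q (a &&& c), ← Nat.xor_assoc, Nat.xor_self, Nat.zero_xor]
        have hus : q ^^^ (a &&& c) ≤ m - 2 * (a &&& c) := band_le hu
        have hsu : (m - 2 * (a &&& c)) - (q ^^^ (a &&& c))
            = (m - 2 * (a &&& c)) ^^^ (q ^^^ (a &&& c)) := sub_of_submask hu
        have hre : ((m - 2 * (a &&& c)) ^^^ (q ^^^ (a &&& c))) &&& (a &&& c) = 0 := by
          refine Nat.eq_of_testBit_eq fun i => ?_
          have b1 := tb hG2 i; have b2 := tb hu i; have b3 := tb hEq i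
          simp only [Nat.testBit_and, Nat.testBit_xor, Nat.zero_testBit] at b1 b2 b3 ⊢
          revert b1 b2 b3
          generalize a.testBit i = A
          generalize c.testBit i = C
          generalize q.testBit i = Q
          generalize (m - 2 * (a &&& c)).testBit i = S
          revert A C Q S
          decide
        have hr_eq : m - q = ((m - 2 * (a &&& c)) ^^^ (q ^^^ (a &&& c))) + (a &&& c) := by
          omega
        have hr_xor : m - q = ((m - 2 * (a &&& c)) ^^^ (q ^^^ (a &&& c))) ^^^ (a &&& c) := by
          rw [hr_eq, add_of_and_eq_zero hre]
        rw [hr_xor]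
        refine Nat.eq_of_testBit_eq fun i => ?_
        have b1 := tb hEq i; have b2 := tb hu i; have b3 := tb hG2 i
        simp only [Nat.testBit_and, Nat.testBit_xor, Nat.zero_testBit] at b1 b2 b3 ⊢
        revert b1 b2 b3
        generalize a.testBit i = A
        generalize c.testBit i = C
        generalize q.testBit i = Q
        generalize (m - 2 * (a &&& c)).testBit i = S
        revert A C Q S
        decide
    rw [Finset.sum_congr rfl (fun q hqm => if_congr
      (q_iff q (Nat.lt_succ_iff.mp (Finset.mem_range.mp hqm))) rfl rfl)]
    have hLM : (a ||| c) &&& ((m - 2 * (a &&& c)) ^^^ (a ^^^ c)) = 0 := by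
      refine Nat.eq_of_testBit_eq fun i => ?_
      have b1 := tb hG2 i; have b2 := tb hG3 i
      simp only [Nat.testBit_and, Nat.testBit_or, Nat.testBit_xor, Nat.zero_testBit] at b1 b2 ⊢
      revert b1 b2
      generalize a.testBit i = A
      generalize c.testBit i = C
      generalize (m - 2 * (a &&& c)).testBit i = S
      revert A C S
      decide
    have hor : (a ||| c) ||| ((m - 2 * (a &&& c)) ^^^ (a ^^^ c))
        = (a &&& c) + (m - 2 * (a &&& c)) := by
      have h1 : (a ||| c) ||| ((m - 2 * (a &&& c)) ^^^ (a ^^^ c))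
          = (a &&& c) ^^^ (m - 2 * (a &&& c)) := by
        refine Nat.eq_of_testBit_eq fun i => ?_
        have b1 := tb hG2 i; have b2 := tb hG3 i
        simp only [Nat.testBit_and, Nat.testBit_or, Nat.testBit_xor, Nat.zero_testBit]
          at b1 b2 ⊢
        revert b1 b2
        generalize a.testBit i = A
        generalize c.testBit i = C
        generalize (m - 2 * (a &&& c)).testBit i = S
        revert A C S
        decide
      have h2 : (a &&& c) &&& (m - 2 * (a &&& c)) = 0 := by
        refine Nat.eq_of_testBit_eq fun i => ?_
        have b1 := tb hG2 i
        simp only [Nat.testBit_and, Nat.zero_testBit] at b1 ⊢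
        revert b1
        generalize a.testBit i = A
        generalize c.testBit i = C
        generalize (m - 2 * (a &&& c)).testBit i = S
        revert A C S
        decide
      rw [h1, add_of_and_eq_zero h2]
    have hN : (a ||| c) ||| ((m - 2 * (a &&& c)) ^^^ (a ^^^ c)) ≤ m := by
      rw [hor]; omega
    rw [sum_submask R m _ _ hLM hN]
    by_cases hm : a + c = m
    · have hsw : (m - 2 * (a &&& c)) ^^^ (a ^^^ c) = 0 := by
        have h0 : m - 2 * (a &&& c) = a ^^^ c := by omega
        rw [h0, Nat.xor_self]
      rw [if_pos hsw, if_pos hm]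
      have hdecomp : a ||| c = (a ^^^ c) ^^^ (a &&& c) := by
        refine Nat.eq_of_testBit_eq fun i => ?_
        simp only [Nat.testBit_and, Nat.testBit_or, Nat.testBit_xor]
        generalize a.testBit i = A
        generalize c.testBit i = C
        revert A C
        decide
      rw [hdecomp, sgn_xor, mul_assoc, sgn_sq, mul_one, sgn_xor, mul_one]
    · have hsw : ¬ ((m - 2 * (a &&& c)) ^^^ (a ^^^ c) = 0) := by
        intro h0
        have h1 := Nat.xor_eq_zero.mp h0
        exact hm (by omega)
      rw [if_neg hsw, if_neg hm, zero_mul, mul_zero]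
  · have hz : ∀ q ∈ Finset.range (m+1),
        (if (a &&& q = a ∧ c &&& q = c ∧ q &&& (m-q) = a &&& c) then sgn R q else 0) = 0 := by
      intro q hqm
      rw [if_neg]
      rintro ⟨haq, hcq, he⟩
      apply hG
      have hqm' : q ≤ m := Nat.lt_succ_iff.mp (Finset.mem_range.mp hqm)
      have he1 : a &&& c ≤ q := by rw [← he]; exact Nat.and_le_left
      have he2 : a &&& c ≤ m - q := by rw [← he]; exact Nat.and_le_right
      have hG1 : 2 * (a &&& c) ≤ m := by omega
      have hs : q ^^^ (m - q) = m - 2 * (a &&& c) := by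
        have hxe := add_eq_xor q (m - q)
        rw [he] at hxe
        omega
      refine ⟨hG1, ?_, ?_⟩
      · rw [← hs]
        refine Nat.eq_of_testBit_eq fun i => ?_
        have b1 := tb he i
        simp only [Nat.testBit_and, Nat.testBit_xor, Nat.zero_testBit] at b1 ⊢
        revert b1
        generalize a.testBit i = A
        generalize c.testBit i = C
        generalize q.testBit i = Q
        generalize (m-q).testBit i = Rb
        revert A C Q Rb
        decide
      · rw [← hs]
        refine Nat.eq_of_testBit_eq fun i => ?_
        have b1 := tb he i; have b2 := tb haq i; have b3 := tb hcq i
        simp only [Nat.testBit_and, Nat.testBit_xor, Nat.zero_testBit] at b1 b2 b3 ⊢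
        revert b1 b2 b3
        generalize a.testBit i = A
        generalize c.testBit i = C
        generalize q.testBit i = Q
        generalize (m-q).testBit i = Rb
        revert A C Q Rb
        decide
    rw [Finset.sum_eq_zero hz, zero_mul]
    have hm : ¬ (a + c = m) := by
      intro hm
      apply hG
      have hsw : m - 2 * (a &&& c) = a ^^^ c := by omega
      refine ⟨by omega, ?_, ?_⟩
      · rw [hsw]
        refine Nat.eq_of_testBit_eq fun i => ?_
        simp only [Nat.testBit_and, Nat.testBit_xor, Nat.zero_testBit]
        generalize a.testBit i = A
        generalize c.testBit i = C
        revert A C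
        decide
      · rw [hsw]
        exact Nat.and_self _
    rw [if_neg hm, mul_zero]

end key


section main
variable (R : Type*) [CommRing R]

lemma coeff_A (k q : ℕ) :
    PowerSeries.coeff q (PowerSeries.X ^ k * delta R k) = if q &&& k = k then 1 else 0 := by
  rw [PowerSeries.coeff_mul, Finset.Nat.sum_antidiagonal_eq_sum_range_succ_mk]
  have e1 : ∀ i ∈ Finset.range (q+1),
      PowerSeries.coeff i (PowerSeries.X ^ k) * PowerSeries.coeff (q - i) (delta R k)
      = if i = k then (if (q - i) &&& k = 0 then (1:R) else 0) else 0 := by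
    intro i _
    rw [PowerSeries.coeff_X_pow, delta, PowerSeries.coeff_mk]
    by_cases h : i = k
    · rw [if_pos h, if_pos h, one_mul]
    · rw [if_neg h, if_neg h, zero_mul]
  rw [Finset.sum_congr rfl e1, Finset.sum_ite_eq' (Finset.range (q+1)) k
    (fun i => if (q - i) &&& k = 0 then (1:R) else 0)]
  by_cases hk : k ≤ q
  · rw [if_pos (Finset.mem_range.mpr (Nat.lt_succ_of_le hk))]
    by_cases h0 : (q - k) &&& k = 0
    · rw [if_pos h0, if_pos (mask_iff1.mp ⟨hk, h0⟩)]
    · rw [if_neg h0, if_neg (fun hcon => h0 (mask_iff1.mpr hcon).2)]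
  · rw [if_neg (fun hcon => hk (Nat.lt_succ_iff.mp (Finset.mem_range.mp hcon))),
      if_neg (fun hcon => hk (mask_iff1.mpr hcon).1)]

lemma coeff_B (φ : PowerSeries R) (k q m : ℕ) (hq : q ≤ m) :
    PowerSeries.coeff q ((Sier R k : PowerSeries R) * barS φ)
    = ∑ x ∈ Finset.range (m+1),
        (if (x ≤ q ∧ (q-x) &&& k = q-x) then sgn R x * PowerSeries.coeff x φ else 0) := by
  rw [PowerSeries.coeff_mul, Finset.Nat.sum_antidiagonal_eq_sum_range_succ_mk]
  have e1 : ∀ j ∈ Finset.range (q+1),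
      PowerSeries.coeff j (Sier R k : PowerSeries R) * PowerSeries.coeff (q-j) (barS φ)
      = (if j &&& k = j then sgn R (q-j) * PowerSeries.coeff (q-j) φ else 0) := by
    intro j _
    rw [Polynomial.coeff_coe, sier_coeff, barS, PowerSeries.coeff_mk]
    by_cases h : j &&& k = j
    · rw [if_pos h, if_pos h, one_mul]
    · rw [if_neg h, if_neg h, zero_mul]
  rw [Finset.sum_congr rfl e1, ← Finset.sum_range_reflect]
  have e2 : ∀ x ∈ Finset.range (q+1),
      (if (q + 1 - 1 - x) &&& k = q + 1 - 1 - x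
        then sgn R (q - (q + 1 - 1 - x)) * PowerSeries.coeff (q - (q + 1 - 1 - x)) φ else 0)
      = (if (x ≤ q ∧ (q-x) &&& k = q-x) then sgn R x * PowerSeries.coeff x φ else 0) := by
    intro x hx
    have hxq : x ≤ q := Nat.lt_succ_iff.mp (Finset.mem_range.mp hx)
    have h1 : q + 1 - 1 - x = q - x := by omega
    have h2 : q - (q - x) = x := by omega
    rw [h1, h2]
    by_cases h : (q - x) &&& k = q - x
    · rw [if_pos h, if_pos ⟨hxq, h⟩]
    · rw [if_neg h, if_neg (fun hcon => h hcon.2)]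
  rw [Finset.sum_congr rfl e2]
  refine Finset.sum_subset (Finset.range_subset_range.mpr (by omega)) ?_
  intro x _ hx
  rw [if_neg]
  rintro ⟨hxq, -⟩
  exact hx (Finset.mem_range.mpr (Nat.lt_succ_of_le hxq))

lemma ite_and_mul (p0 p1 p2 p3 : Prop) [Decidable p0] [Decidable p1] [Decidable p2]
    [Decidable p3] (s x y : R) :
    s * ((if p0 then (1:R) else 0) * ((if p1 then (1:R) else 0) *
      ((if p2 then x else 0) * (if p3 then y else 0))))
    = (if (p0 ∧ p1 ∧ p2 ∧ p3) then s else 0) * (x * y) := by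
  by_cases h0 : p0 <;> by_cases h1 : p1 <;> by_cases h2 : p2 <;> by_cases h3 : p3 <;>
    simp [h0, h1, h2, h3] <;> ring

lemma sum_swap4 {M : Type*} [AddCommMonoid M] (s : Finset ℕ) (T : ℕ → ℕ → ℕ → ℕ → M) :
    (∑ k ∈ s, ∑ q ∈ s, ∑ a ∈ s, ∑ c ∈ s, T k q a c)
    = ∑ a ∈ s, ∑ c ∈ s, ∑ q ∈ s, ∑ k ∈ s, T k q a c := by
  calc (∑ k ∈ s, ∑ q ∈ s, ∑ a ∈ s, ∑ c ∈ s, T k q a c)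
      = ∑ k ∈ s, ∑ a ∈ s, ∑ q ∈ s, ∑ c ∈ s, T k q a c :=
        Finset.sum_congr rfl fun k _ => Finset.sum_comm
    _ = ∑ a ∈ s, ∑ k ∈ s, ∑ q ∈ s, ∑ c ∈ s, T k q a c := Finset.sum_comm
    _ = ∑ a ∈ s, ∑ k ∈ s, ∑ c ∈ s, ∑ q ∈ s, T k q a c :=
        Finset.sum_congr rfl fun a _ => Finset.sum_congr rfl fun k _ => Finset.sum_comm
    _ = ∑ a ∈ s, ∑ c ∈ s, ∑ k ∈ s, ∑ q ∈ s, T k q a c :=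
        Finset.sum_congr rfl fun a _ => Finset.sum_comm
    _ = ∑ a ∈ s, ∑ c ∈ s, ∑ q ∈ s, ∑ k ∈ s, T k q a c :=
        Finset.sum_congr rfl fun a _ => Finset.sum_congr rfl fun c _ => Finset.sum_comm

theorem convolution_series_bar' (f g : PowerSeries R) (m : ℕ) :
    PowerSeries.coeff m (f * g) =
      ∑ k ∈ Finset.range (m + 1), sgn R k *
        PowerSeries.coeff m (delta R k *
          hadS (hadS (PowerSeries.X ^ k * delta R k) ((Sier R k : PowerSeries R) * barS f))
            ((Sier R k : PowerSeries R) * barS g)) := by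
  classical
  symm
  have step1 : ∀ k : ℕ,
      PowerSeries.coeff m (delta R k *
        hadS (hadS (PowerSeries.X ^ k * delta R k) ((Sier R k : PowerSeries R) * barS f))
          ((Sier R k : PowerSeries R) * barS g))
      = ∑ q ∈ Finset.range (m+1), (if (m-q) &&& k = 0 then (1:R) else 0) *
          (PowerSeries.coeff q (PowerSeries.X ^ k * delta R k) *
           (PowerSeries.coeff q ((Sier R k : PowerSeries R) * barS f) *
            PowerSeries.coeff q ((Sier R k : PowerSeries R) * barS g))) := by
    intro k
    rw [PowerSeries.coeff_mul, Finset.Nat.sum_antidiagonal_eq_sum_range_succ_mk,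
      ← Finset.sum_range_reflect]
    refine Finset.sum_congr rfl fun q hq => ?_
    have hqm : q ≤ m := Nat.lt_succ_iff.mp (Finset.mem_range.mp hq)
    have h1 : m + 1 - 1 - q = m - q := by omega
    have h2 : m - (m - q) = q := by omega
    rw [h1, h2, delta, PowerSeries.coeff_mk, hadS, PowerSeries.coeff_mk, hadS,
      PowerSeries.coeff_mk, mul_assoc]
  calc (∑ k ∈ Finset.range (m + 1), sgn R k *
        PowerSeries.coeff m (delta R k *
          hadS (hadS (PowerSeries.X ^ k * delta R k) ((Sier R k : PowerSeries R) * barS f))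
            ((Sier R k : PowerSeries R) * barS g)))
      = ∑ k ∈ Finset.range (m+1), ∑ q ∈ Finset.range (m+1), ∑ a ∈ Finset.range (m+1),
          ∑ c ∈ Finset.range (m+1),
          (if ((m-q) &&& k = 0 ∧ q &&& k = k ∧ (a ≤ q ∧ (q-a) &&& k = q-a) ∧
              (c ≤ q ∧ (q-c) &&& k = q-c)) then sgn R k else 0) *
            ((sgn R a * PowerSeries.coeff a f) * (sgn R c * PowerSeries.coeff c g)) := by
        refine Finset.sum_congr rfl fun k _ => ?_
        rw [step1 k, Finset.mul_sum]
        refine Finset.sum_congr rfl fun q hq => ?_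
        have hqm : q ≤ m := Nat.lt_succ_iff.mp (Finset.mem_range.mp hq)
        rw [coeff_A, coeff_B R f k q m hqm, coeff_B R g k q m hqm, Finset.sum_mul_sum]
        simp only [Finset.mul_sum]
        refine Finset.sum_congr rfl fun a _ => Finset.sum_congr rfl fun c _ => ?_
        exact ite_and_mul R _ _ _ _ _ _ _
    _ = ∑ a ∈ Finset.range (m+1), ∑ c ∈ Finset.range (m+1), ∑ q ∈ Finset.range (m+1),
          ∑ k ∈ Finset.range (m+1),
          (if ((m-q) &&& k = 0 ∧ q &&& k = k ∧ (a ≤ q ∧ (q-a) &&& k = q-a) ∧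
              (c ≤ q ∧ (q-c) &&& k = q-c)) then sgn R k else 0) *
            ((sgn R a * PowerSeries.coeff a f) * (sgn R c * PowerSeries.coeff c g)) :=
        sum_swap4 _ _
    _ = ∑ a ∈ Finset.range (m+1), ∑ c ∈ Finset.range (m+1),
          (if a + c = m then (1:R) else 0) *
            (PowerSeries.coeff a f * PowerSeries.coeff c g) := by
        refine Finset.sum_congr rfl fun a ham => Finset.sum_congr rfl fun c hcm => ?_
        have ham' : a ≤ m := Nat.lt_succ_iff.mp (Finset.mem_range.mp ham)
        have hcm' : c ≤ m := Nat.lt_succ_iff.mp (Finset.mem_range.mp hcm)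
        have e3 : ∀ q ∈ Finset.range (m+1),
            (∑ k ∈ Finset.range (m+1),
              (if ((m-q) &&& k = 0 ∧ q &&& k = k ∧ (a ≤ q ∧ (q-a) &&& k = q-a) ∧
                  (c ≤ q ∧ (q-c) &&& k = q-c)) then sgn R k else 0) *
                ((sgn R a * PowerSeries.coeff a f) * (sgn R c * PowerSeries.coeff c g)))
            = (∑ k ∈ Finset.range (m+1),
                (if ((m-q) &&& k = 0 ∧ q &&& k = k ∧ a ≤ q ∧ (q-a) &&& k = q-a ∧
                    c ≤ q ∧ (q-c) &&& k = q-c) then sgn R k else 0)) *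
                ((sgn R a * PowerSeries.coeff a f) * (sgn R c * PowerSeries.coeff c g)) := by
          intro q _
          rw [Finset.sum_mul]
          refine Finset.sum_congr rfl fun k _ => ?_
          congr 1
          exact if_congr (by tauto) rfl rfl
        rw [Finset.sum_congr rfl e3, ← Finset.sum_mul, key R m a c ham' hcm']
        have h1 := sgn_sq R a
        have h2 := sgn_sq R c
        set t := if a + c = m then (1:R) else 0
        linear_combination (t * PowerSeries.coeff a f * PowerSeries.coeff c g *
          (sgn R c * sgn R c)) * h1 + (t * PowerSeries.coeff a f *
          PowerSeries.coeff c g) * h2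
    _ = ∑ a ∈ Finset.range (m+1),
          PowerSeries.coeff a f * PowerSeries.coeff (m-a) g := by
        refine Finset.sum_congr rfl fun a ham => ?_
        have ham' : a ≤ m := Nat.lt_succ_iff.mp (Finset.mem_range.mp ham)
        have e4 : ∀ c ∈ Finset.range (m+1),
            (if a + c = m then (1:R) else 0) *
              (PowerSeries.coeff a f * PowerSeries.coeff c g)
            = if c = m - a then PowerSeries.coeff a f * PowerSeries.coeff c g else 0 := by
          intro c _
          rw [ite_mul, one_mul, zero_mul]
          exact if_congr (by omega) rfl rfl
        rw [Finset.sum_congr rfl e4, Finset.sum_ite_eq' (Finset.range (m+1)) (m-a)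
          (fun c => PowerSeries.coeff a f * PowerSeries.coeff c g),
          if_pos (Finset.mem_range.mpr (by omega))]
    _ = PowerSeries.coeff m (f * g) := by
        rw [PowerSeries.coeff_mul, Finset.Nat.sum_antidiagonal_eq_sum_range_succ_mk]

end main


/-- For power series f, g and every m,
(f * g)[m] = Σ_{k=0}^{m} σ k * [δ k * ((x^k * δ k) ⊙ (S k * f̄) ⊙ (S k * ḡ))][m],
where f̄ = σ ⊙ f and ḡ = σ ⊙ g. -/
theorem convolution_series_bar (R : Type*) [CommRing R] (f g : PowerSeries R) (m : ℕ) :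
    PowerSeries.coeff m (f * g) =
      ∑ k ∈ Finset.range (m + 1), sgn R k *
        PowerSeries.coeff m (delta R k *
          hadS (hadS (PowerSeries.X ^ k * delta R k) ((Sier R k : PowerSeries R) * barS f))
            ((Sier R k : PowerSeries R) * barS g)) := by
  exact convolution_series_bar' R f g m
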